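/- Let p be a prime, let R be a perfect 𝔽_p-algebra, let ε : ℤ[R] → R be the augmentation ring homomorphism with ε([r]) = r, let I = ker ε, and let ι : ℤ[R] → W(R) be the ring homomorphism with ι([r]) = τ(r). Let M be a module over ℤ[R]. Then the following are equivalent: (1) M is p-adically complete (the natural map M → lim M/pⁿM is bijective) and there exists a W(R)-module structure on M whose restriction along ι is the given ℤ[R]-module structure; (2) M is I-adically complete, i.e. the natural map M → lim M/IⁿM is bijective (IsAdicComplete I M). -/

import Mathlib

/-- The augmentation ring homomorphism `ε : ℤ[R] → R` from the monoid algebra of the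
multiplicative monoid `(R, ·)`, sending the basis element `[r]` to `r`. -/
noncomputable def monoidAlgebraAugmentation (R : Type*) [CommRing R] :
    MonoidAlgebra ℤ R →+* R :=
  ((MonoidAlgebra.lift ℤ R R) (MonoidHom.id R)).toRingHom

/-- The ring homomorphism `ι : ℤ[R] → W(R)` from the monoid algebra of the multiplicative
monoid `(R, ·)` determined by `ι ([r]) = τ(r)`, the Teichmüller lift. -/
noncomputable def wittIota (p : ℕ) [Fact p.Prime] (R : Type*) [CommRing R] :
    MonoidAlgebra ℤ R →+* WittVector p R :=
  ((MonoidAlgebra.lift ℤ (WittVector p R) R) (WittVector.teichmuller p)).toRingHom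

set_option linter.unusedSectionVars false

namespace Stmt16Aux

variable (p : ℕ) [Fact p.Prime] (R : Type*) [CommRing R] [CharP R p] [PerfectRing R p]

lemma ringHom_ext_int {S : Type*} [Ring S] {f g : MonoidAlgebra ℤ R →+* S}
    (h : ∀ r, f (MonoidAlgebra.of ℤ R r) = g (MonoidAlgebra.of ℤ R r)) : f = g := by
  refine MonoidAlgebra.ringHom_ext (fun b => ?_) h
  have : (MonoidAlgebra.single (1:R) b : MonoidAlgebra ℤ R) = (b : MonoidAlgebra ℤ R) := by
    rw [MonoidAlgebra.intCast_def, Int.cast_id]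
  rw [this, map_intCast, map_intCast]

@[simp] lemma eps_of (r : R) :
    monoidAlgebraAugmentation R (MonoidAlgebra.of ℤ R r) = r := by
  simp [monoidAlgebraAugmentation]

@[simp] lemma iota_of (r : R) :
    wittIota p R (MonoidAlgebra.of ℤ R r) = WittVector.teichmuller p r := by
  simp [wittIota]

/-- `ψ`, induced by Frobenius on `R`. -/
noncomputable def psi : MonoidAlgebra ℤ R →+* MonoidAlgebra ℤ R :=
  ((MonoidAlgebra.lift ℤ (MonoidAlgebra ℤ R) R)
    ((MonoidAlgebra.of ℤ R).comp (frobenius R p).toMonoidHom)).toRingHom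

/-- `φ`, induced by the inverse of Frobenius on `R`. -/
noncomputable def phi : MonoidAlgebra ℤ R →+* MonoidAlgebra ℤ R :=
  ((MonoidAlgebra.lift ℤ (MonoidAlgebra ℤ R) R)
    ((MonoidAlgebra.of ℤ R).comp ((frobeniusEquiv R p).symm : R →+* R).toMonoidHom)).toRingHom

@[simp] lemma psi_of (r : R) :
    psi p R (MonoidAlgebra.of ℤ R r) = MonoidAlgebra.of ℤ R (r ^ p) := by
  simp [psi, frobenius_def]

@[simp] lemma phi_of (r : R) :
    phi p R (MonoidAlgebra.of ℤ R r) = MonoidAlgebra.of ℤ R ((frobeniusEquiv R p).symm r) := by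
  simp [phi]

lemma psi_phi (x : MonoidAlgebra ℤ R) : psi p R (phi p R x) = x := by
  have : (psi p R).comp (phi p R) = RingHom.id _ := by
    refine ringHom_ext_int R (fun r => ?_)
    simp only [RingHom.coe_comp, Function.comp_apply, phi_of, psi_of, RingHom.id_apply]
    congr 1
    have := frobenius_apply_frobeniusEquiv_symm R p r
    simpa [frobenius_def] using this
  exact RingHom.congr_fun this x

lemma eps_phi (x : MonoidAlgebra ℤ R) :
    monoidAlgebraAugmentation R (phi p R x) =
      (frobeniusEquiv R p).symm (monoidAlgebraAugmentation R x) := by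
  have : (monoidAlgebraAugmentation R).comp (phi p R) =
      (((frobeniusEquiv R p).symm : R →+* R)).comp (monoidAlgebraAugmentation R) := by
    refine ringHom_ext_int R (fun r => ?_)
    simp only [RingHom.coe_comp, Function.comp_apply, phi_of, eps_of, RingHom.coe_coe]
  exact RingHom.congr_fun this x


local notation "𝕀" => RingHom.ker (monoidAlgebraAugmentation R)
local notation "sp" => Ideal.span {((p : ℕ) : MonoidAlgebra ℤ R)}

lemma charP_quot : CharP ((MonoidAlgebra ℤ R) ⧸ (Ideal.span {((p:ℕ) : MonoidAlgebra ℤ R)})) p := by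
  constructor
  intro n
  constructor
  · intro hn
    -- map to ZMod p
    let π₀ : MonoidAlgebra ℤ R →+* ℤ :=
      ((MonoidAlgebra.lift ℤ ℤ R) (1 : R →* ℤ)).toRingHom
    let π : MonoidAlgebra ℤ R →+* ZMod p := (Int.castRingHom (ZMod p)).comp π₀
    have hker : Ideal.span {((p:ℕ) : MonoidAlgebra ℤ R)} ≤ RingHom.ker π := by
      rw [Ideal.span_le]
      intro x hx
      simp only [Set.mem_singleton_iff] at hx
      subst hx
      simp [RingHom.mem_ker]
    let πq := Ideal.Quotient.lift _ π hker
    have : (πq ((n : ℕ) : _) : ZMod p) = 0 := by rw [hn, map_zero]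
    rw [map_natCast] at this
    exact (ZMod.natCast_eq_zero_iff n p).mp this
  · rintro ⟨k, rfl⟩
    push_cast
    have : ((p:ℕ) : (MonoidAlgebra ℤ R) ⧸ (Ideal.span {((p:ℕ) : MonoidAlgebra ℤ R)})) = 0 := by
      rw [← map_natCast (Ideal.Quotient.mk _)]
      rw [Ideal.Quotient.eq_zero_iff_mem]
      exact Ideal.mem_span_singleton_self _
    rw [this, zero_mul]

lemma pow_p_sub_psi_mem (x : MonoidAlgebra ℤ R) :
    x ^ p - psi p R x ∈ Ideal.span {((p:ℕ) : MonoidAlgebra ℤ R)} := by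
  haveI := charP_quot p R
  set Q := (MonoidAlgebra ℤ R) ⧸ (Ideal.span {((p:ℕ) : MonoidAlgebra ℤ R)})
  let mk : MonoidAlgebra ℤ R →+* Q := Ideal.Quotient.mk _
  have key : (frobenius Q p).comp mk = mk.comp (psi p R) := by
    refine ringHom_ext_int R (fun r => ?_)
    simp only [RingHom.coe_comp, Function.comp_apply, psi_of, frobenius_def]
    rw [← map_pow, ← map_pow]
  have : mk (x ^ p - psi p R x) = 0 := by
    rw [map_sub, map_pow]
    have h1 : mk x ^ p = frobenius Q p (mk x) := by rw [frobenius_def]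
    rw [h1]
    have := RingHom.congr_fun key x
    simp only [RingHom.coe_comp, Function.comp_apply] at this
    rw [this, sub_self]
  exact (Ideal.Quotient.eq_zero_iff_mem).mp this

lemma mem_ker_iff (x : MonoidAlgebra ℤ R) : x ∈ 𝕀 ↔ monoidAlgebraAugmentation R x = 0 :=
  RingHom.mem_ker

lemma p_mem_ker : ((p:ℕ) : MonoidAlgebra ℤ R) ∈ 𝕀 := by
  rw [mem_ker_iff, map_natCast]
  exact CharP.cast_eq_zero R p

lemma ker_le_span_sup_sq : 𝕀 ≤ sp ⊔ 𝕀 ^ 2 := by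
  intro x hx
  have hphi : phi p R x ∈ 𝕀 := by
    rw [mem_ker_iff, eps_phi, (mem_ker_iff R x).mp hx, map_zero]
  have h1 : (phi p R x) ^ p - x ∈ sp := by
    have := pow_p_sub_psi_mem p R (phi p R x)
    rwa [psi_phi] at this
  have h2 : (phi p R x) ^ p ∈ 𝕀 ^ 2 := by
    have hp2 : 2 ≤ p := (Fact.out : p.Prime).two_le
    exact Ideal.pow_le_pow_right hp2 (Ideal.pow_mem_pow hphi p)
  have : x = -((phi p R x) ^ p - x) + (phi p R x) ^ p := by ring
  rw [this]
  exact Submodule.add_mem_sup (neg_mem h1) h2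

lemma ker_pow_le (n : ℕ) : 𝕀 ^ n ≤ sp ^ n ⊔ 𝕀 ^ (n + 1) := by
  induction n with
  | zero => simp
  | succ n ih =>
    have hsp_le : sp ≤ 𝕀 := by
      rw [Ideal.span_le]; intro x hx
      simp only [Set.mem_singleton_iff] at hx; subst hx; exact p_mem_ker p R
    calc 𝕀 ^ (n + 1) = 𝕀 ^ n * 𝕀 := by rw [pow_succ]
      _ ≤ (sp ^ n ⊔ 𝕀 ^ (n+1)) * (sp ⊔ 𝕀 ^ 2) := Ideal.mul_mono ih (ker_le_span_sup_sq p R)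
      _ ≤ sp ^ (n+1) ⊔ 𝕀 ^ (n + 2) := by
          rw [Ideal.sup_mul, Ideal.mul_sup, Ideal.mul_sup]
          refine sup_le (sup_le ?_ ?_) (sup_le ?_ ?_)
          · rw [← pow_succ]; exact le_sup_left
          · refine le_trans (Ideal.mul_mono (Ideal.pow_right_mono hsp_le _) le_rfl) ?_
            rw [← pow_add]
            exact le_sup_right
          · refine le_trans (Ideal.mul_mono le_rfl hsp_le) ?_
            rw [← pow_succ]
            exact le_sup_right
          · refine le_trans (Ideal.mul_mono le_rfl le_rfl) ?_
            rw [← pow_add]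
            have : 𝕀 ^ (n + 1 + 2) ≤ 𝕀 ^ (n + 2) := Ideal.pow_le_pow_right (by omega)
            exact le_trans this le_sup_right


open WittVector in
lemma w_dvd_of_coeff_zero (x : WittVector p R) (h : x.coeff 0 = 0) :
    ∃ z : WittVector p R, x = z * (p : WittVector p R) := by
  let u : WittVector p R := WittVector.mk p (fun i => x.coeff (i + 1))
  have hu : verschiebung u = x := by
    refine WittVector.ext (fun n => ?_)
    cases n with
    | zero => rw [verschiebung_coeff_zero, h]
    | succ n => rw [verschiebung_coeff_succ]; rfl
  refine ⟨(WittVector.frobeniusEquiv p R).symm u, ?_⟩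
  have hf : WittVector.frobenius ((WittVector.frobeniusEquiv p R).symm u) = u :=
    (WittVector.frobeniusEquiv p R).apply_symm_apply u
  rw [← verschiebung_frobenius, hf, hu]

open WittVector in
lemma w_mul_p_cancel (z : WittVector p R) (h : z * (p : WittVector p R) = 0) : z = 0 := by
  rw [← verschiebung_frobenius] at h
  have h2 : WittVector.frobenius z = 0 := by
    refine WittVector.ext (fun n => ?_)
    have := congrArg (fun w => WittVector.coeff w (n+1)) h
    simpa [verschiebung_coeff_succ] using this
  have := (WittVector.frobenius_bijective p R).injective (a₁ := z) (a₂ := 0)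
  simp only [map_zero] at this
  exact this h2

lemma w_mul_pn_cancel (n : ℕ) (z : WittVector p R)
    (h : z * ((p : WittVector p R)) ^ n = 0) : z = 0 := by
  induction n with
  | zero => simpa using h
  | succ n ih =>
    apply ih
    apply w_mul_p_cancel p R
    rw [mul_assoc, ← pow_succ]
    exact h

lemma iota_mem_span_p_iff (x : MonoidAlgebra ℤ R) :
    wittIota p R x ∈ Ideal.span {((p:ℕ) : WittVector p R)} ↔ x ∈ 𝕀 := by
  constructor
  · intro hx
    rw [Ideal.mem_span_singleton'] at hx
    obtain ⟨w, hw⟩ := hx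
    rw [mem_ker_iff]
    have h0 : WittVector.constantCoeff (wittIota p R x) = monoidAlgebraAugmentation R x := by
      have : (WittVector.constantCoeff).comp (wittIota p R) = monoidAlgebraAugmentation R := by
        refine ringHom_ext_int R (fun r => ?_)
        simp only [RingHom.coe_comp, Function.comp_apply]
        rw [iota_of, eps_of]
        exact WittVector.teichmuller_coeff_zero p r
      exact RingHom.congr_fun this x
    rw [← h0, ← hw, map_mul, map_natCast]
    rw [CharP.cast_eq_zero R p, mul_zero]
  · intro hx
    have h0 : (wittIota p R x).coeff 0 = 0 := by
      have : (WittVector.constantCoeff).comp (wittIota p R) = monoidAlgebraAugmentation R := by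
        refine ringHom_ext_int R (fun r => ?_)
        simp only [RingHom.coe_comp, Function.comp_apply]
        rw [iota_of, eps_of]
        exact WittVector.teichmuller_coeff_zero p r
      have h := RingHom.congr_fun this x
      simp only [RingHom.coe_comp, Function.comp_apply] at h
      have : (wittIota p R x).coeff 0 = WittVector.constantCoeff (wittIota p R x) := rfl
      rw [this, h, (mem_ker_iff R x).mp hx]
    obtain ⟨z, hz⟩ := w_dvd_of_coeff_zero p R _ h0
    rw [Ideal.mem_span_singleton']
    exact ⟨z, hz.symm⟩

lemma iota_pow_mem (n : ℕ) (x : MonoidAlgebra ℤ R) (hx : x ∈ 𝕀 ^ n) :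
    wittIota p R x ∈ Ideal.span {((p : WittVector p R)) ^ n} := by
  rw [← Ideal.span_singleton_pow]
  have hmap : Ideal.map (wittIota p R) (𝕀 ^ n) ≤ (Ideal.span {((p:ℕ) : WittVector p R)}) ^ n := by
    rw [Ideal.map_pow]
    refine Ideal.pow_right_mono ?_ n
    rw [Ideal.map_le_iff_le_comap]
    intro y hy
    exact (iota_mem_span_p_iff p R y).mpr hy
  have : ((p : WittVector p R)) = (((p:ℕ) : WittVector p R)) := by norm_cast
  rw [this]
  exact hmap (Ideal.mem_map_of_mem _ hx)

lemma preimage_pn : ∀ (n : ℕ) (x : MonoidAlgebra ℤ R),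
    wittIota p R x ∈ Ideal.span {((p : WittVector p R)) ^ n} → x ∈ 𝕀 ^ n := by
  intro n
  induction n with
  | zero => intro x _; simpa using Ideal.mem_top
  | succ n ih =>
    intro x hx
    have hxn : x ∈ 𝕀 ^ n := by
      apply ih
      rw [Ideal.mem_span_singleton] at hx ⊢
      exact dvd_trans (pow_dvd_pow _ (Nat.le_succ n)) hx
    obtain ⟨c, hc, y, hy, hxy⟩ := Submodule.mem_sup.mp (ker_pow_le p R n hxn)
    have hcspan : c ∈ Ideal.span {((p:ℕ) : MonoidAlgebra ℤ R) ^ n} := by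
      rwa [← Ideal.span_singleton_pow]
    obtain ⟨a, ha⟩ := Ideal.mem_span_singleton'.mp hcspan
    have hyι : wittIota p R y ∈ Ideal.span {((p : WittVector p R)) ^ (n+1)} :=
      iota_pow_mem p R (n+1) y hy
    have hcι : wittIota p R c ∈ Ideal.span {((p : WittVector p R)) ^ (n+1)} := by
      have : wittIota p R c = wittIota p R x - wittIota p R y := by
        rw [← map_sub]; congr 1; rw [← hxy]; ring
      rw [this]
      exact Ideal.sub_mem _ hx hyι
    obtain ⟨w, hw⟩ := Ideal.mem_span_singleton'.mp hcι
    have hιc : wittIota p R c = wittIota p R a * ((p : WittVector p R)) ^ n := by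
      rw [← ha, map_mul, map_pow, map_natCast]
    have h0 : (wittIota p R a - w * (p : WittVector p R)) * ((p : WittVector p R)) ^ n = 0 := by
      rw [sub_mul, ← hιc, ← hw]
      ring
    have hcancel : wittIota p R a = w * (p : WittVector p R) :=
      sub_eq_zero.mp (w_mul_pn_cancel p R n _ h0)
    have haI : a ∈ 𝕀 := by
      refine (iota_mem_span_p_iff p R a).mp ?_
      exact Ideal.mem_span_singleton'.mpr ⟨w, hcancel.symm⟩
    have hcI : c ∈ 𝕀 ^ (n + 1) := by
      rw [← ha]
      have := Ideal.mul_mem_mul haI (Ideal.pow_mem_pow (p_mem_ker p R) n)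
      rwa [← pow_succ'] at this
    rw [← hxy]
    exact Ideal.add_mem _ hcI hy


lemma exists_approx (w : WittVector p R) (n : ℕ) :
    ∃ a : MonoidAlgebra ℤ R, w - wittIota p R a ∈ Ideal.span {((p : WittVector p R)) ^ n} := by
  induction n with
  | zero =>
    exact ⟨0, by rw [Ideal.mem_span_singleton, pow_zero]; exact one_dvd _⟩
  | succ n ih =>
    obtain ⟨a, ha⟩ := ih
    obtain ⟨u, hu⟩ := Ideal.mem_span_singleton'.mp ha
    set r := u.coeff 0 with hr
    refine ⟨a + ((p:ℕ) : MonoidAlgebra ℤ R) ^ n * MonoidAlgebra.of ℤ R r, ?_⟩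
    have key : w - wittIota p R (a + ((p:ℕ) : MonoidAlgebra ℤ R) ^ n * MonoidAlgebra.of ℤ R r) =
        (u - WittVector.teichmuller p r) * ((p : WittVector p R)) ^ n := by
      rw [map_add, map_mul, map_pow, map_natCast, iota_of]
      linear_combination -hu
    rw [key]
    have h0 : (u - WittVector.teichmuller p r).coeff 0 = 0 := by
      have : (u - WittVector.teichmuller p r).coeff 0 =
          WittVector.constantCoeff u - WittVector.constantCoeff (WittVector.teichmuller p r) := by
        rw [← map_sub]; rfl
      rw [this]
      have ht : WittVector.constantCoeff (WittVector.teichmuller p r) = r :=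
        WittVector.teichmuller_coeff_zero p r
      rw [ht]
      simp [hr, WittVector.constantCoeff_apply]
    obtain ⟨z, hz⟩ := w_dvd_of_coeff_zero p R _ h0
    rw [hz, Ideal.mem_span_singleton]
    exact ⟨z, by ring⟩

section ModulePart

variable {M : Type*} [AddCommGroup M] [Module (MonoidAlgebra ℤ R) M]

/-- canonical approximations to a Witt vector -/
noncomputable def approx (w : WittVector p R) (n : ℕ) : MonoidAlgebra ℤ R :=
  (exists_approx p R w n).choose

lemma approx_spec (w : WittVector p R) (n : ℕ) :
    w - wittIota p R (approx p R w n) ∈ Ideal.span {((p : WittVector p R)) ^ n} :=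
  (exists_approx p R w n).choose_spec

lemma diff_mem (w : WittVector p R) {b c : MonoidAlgebra ℤ R} {n : ℕ}
    (hb : w - wittIota p R b ∈ Ideal.span {((p : WittVector p R)) ^ n})
    (hc : w - wittIota p R c ∈ Ideal.span {((p : WittVector p R)) ^ n}) :
    b - c ∈ 𝕀 ^ n := by
  apply preimage_pn p R n
  rw [map_sub]
  have : wittIota p R b - wittIota p R c = (w - wittIota p R c) - (w - wittIota p R b) := by ring
  rw [this]
  exact Ideal.sub_mem _ hc hb

lemma smul_mem_of_mem {d : MonoidAlgebra ℤ R} {n : ℕ} (hd : d ∈ 𝕀 ^ n) (x : M) :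
    d • x ∈ (𝕀 ^ n • ⊤ : Submodule (MonoidAlgebra ℤ R) M) :=
  Submodule.smul_mem_smul hd Submodule.mem_top

lemma approx_compat (w : WittVector p R) (x : M) {m n : ℕ} (hmn : m ≤ n) :
    approx p R w m • x ≡ approx p R w n • x
      [SMOD (𝕀 ^ m • ⊤ : Submodule (MonoidAlgebra ℤ R) M)] := by
  rw [SModEq.sub_mem, ← sub_smul]
  refine smul_mem_of_mem R ?_ x
  refine diff_mem p R w (approx_spec p R w m) ?_
  refine Ideal.span_singleton_le_span_singleton.mpr (pow_dvd_pow _ hmn) (approx_spec p R w n)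

noncomputable def wsmul (hc : IsAdicComplete (RingHom.ker (monoidAlgebraAugmentation R)) M) (w : WittVector p R) (x : M) : M :=
  (hc.toIsPrecomplete.prec (f := fun n => approx p R w n • x)
    (fun {m n} hmn => approx_compat p R w x hmn)).choose

lemma wsmul_spec (hc : IsAdicComplete (RingHom.ker (monoidAlgebraAugmentation R)) M) (w : WittVector p R) (x : M) (n : ℕ) :
    approx p R w n • x ≡ wsmul p R hc w x
      [SMOD (𝕀 ^ n • ⊤ : Submodule (MonoidAlgebra ℤ R) M)] :=
  (hc.toIsPrecomplete.prec (f := fun n => approx p R w n • x)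
    (fun {m n} hmn => approx_compat p R w x hmn)).choose_spec n

lemma wsmul_unique (hc : IsAdicComplete (RingHom.ker (monoidAlgebraAugmentation R)) M) (w : WittVector p R) (x : M) (b : ℕ → MonoidAlgebra ℤ R)
    (hb : ∀ n, w - wittIota p R (b n) ∈ Ideal.span {((p : WittVector p R)) ^ n})
    (L : M) (hL : ∀ n, b n • x ≡ L [SMOD (𝕀 ^ n • ⊤ : Submodule (MonoidAlgebra ℤ R) M)]) :
    wsmul p R hc w x = L := by
  rw [← sub_eq_zero]
  apply hc.toIsHausdorff.haus
  intro n
  rw [SModEq.zero]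
  have h1 := (wsmul_spec p R hc w x n).symm
  have h2 : approx p R w n • x ≡ b n • x
      [SMOD (𝕀 ^ n • ⊤ : Submodule (MonoidAlgebra ℤ R) M)] := by
    rw [SModEq.sub_mem, ← sub_smul]
    exact smul_mem_of_mem R (diff_mem p R w (approx_spec p R w n) (hb n)) x
  have h3 := (h1.trans h2).trans (hL n)
  rwa [SModEq.sub_mem] at h3

lemma wsmul_iota (hc : IsAdicComplete (RingHom.ker (monoidAlgebraAugmentation R)) M) (a : MonoidAlgebra ℤ R) (x : M) : wsmul p R hc (wittIota p R a) x = a • x := by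
  refine wsmul_unique p R hc _ x (fun _ => a) (fun n => ?_) _ (fun n => SModEq.refl _)
  rw [sub_self]
  exact Ideal.zero_mem _

lemma wsmul_mul (hc : IsAdicComplete (RingHom.ker (monoidAlgebraAugmentation R)) M) (w w' : WittVector p R) (x : M) :
    wsmul p R hc (w * w') x = wsmul p R hc w (wsmul p R hc w' x) := by
  refine wsmul_unique p R hc _ x (fun n => approx p R w n * approx p R w' n) (fun n => ?_) _
    (fun n => ?_)
  · have : w * w' - wittIota p R (approx p R w n * approx p R w' n) =
        w * (w' - wittIota p R (approx p R w' n)) +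
          (w - wittIota p R (approx p R w n)) * wittIota p R (approx p R w' n) := by
      rw [map_mul]; ring
    rw [this]
    exact Ideal.add_mem _ (Ideal.mul_mem_left _ _ (approx_spec p R w' n))
      (Ideal.mul_mem_right _ _ (approx_spec p R w n))
  · rw [mul_smul]
    have h1 : approx p R w n • (approx p R w' n • x) ≡
        approx p R w n • (wsmul p R hc w' x)
        [SMOD (𝕀 ^ n • ⊤ : Submodule (MonoidAlgebra ℤ R) M)] :=
      (wsmul_spec p R hc w' x n).smul _
    exact h1.trans (wsmul_spec p R hc w (wsmul p R hc w' x) n)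

lemma wsmul_add (hc : IsAdicComplete (RingHom.ker (monoidAlgebraAugmentation R)) M) (w : WittVector p R) (x y : M) :
    wsmul p R hc w (x + y) = wsmul p R hc w x + wsmul p R hc w y := by
  refine wsmul_unique p R hc w (x + y) (approx p R w) (approx_spec p R w) _ (fun n => ?_)
  rw [smul_add]
  exact (wsmul_spec p R hc w x n).add (wsmul_spec p R hc w y n)

lemma wsmul_addl (hc : IsAdicComplete (RingHom.ker (monoidAlgebraAugmentation R)) M) (w w' : WittVector p R) (x : M) :
    wsmul p R hc (w + w') x = wsmul p R hc w x + wsmul p R hc w' x := by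
  refine wsmul_unique p R hc _ x (fun n => approx p R w n + approx p R w' n) (fun n => ?_) _
    (fun n => ?_)
  · have : w + w' - wittIota p R (approx p R w n + approx p R w' n) =
        (w - wittIota p R (approx p R w n)) + (w' - wittIota p R (approx p R w' n)) := by
      rw [map_add]; ring
    rw [this]
    exact Ideal.add_mem _ (approx_spec p R w n) (approx_spec p R w' n)
  · rw [add_smul]
    exact (wsmul_spec p R hc w x n).add (wsmul_spec p R hc w' x n)

lemma wsmul_one (hc : IsAdicComplete (RingHom.ker (monoidAlgebraAugmentation R)) M) (x : M) : wsmul p R hc 1 x = x := by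
  have h1 : (1 : WittVector p R) = wittIota p R 1 := (map_one _).symm
  rw [h1, wsmul_iota, one_smul]

lemma wsmul_zero_left (hc : IsAdicComplete (RingHom.ker (monoidAlgebraAugmentation R)) M) (x : M) : wsmul p R hc 0 x = 0 := by
  have h1 : (0 : WittVector p R) = wittIota p R 0 := (map_zero _).symm
  rw [h1, wsmul_iota, zero_smul]

lemma wsmul_zero_right (hc : IsAdicComplete (RingHom.ker (monoidAlgebraAugmentation R)) M) (w : WittVector p R) : wsmul p R hc w (0 : M) = 0 := by
  refine wsmul_unique p R hc w 0 (approx p R w) (approx_spec p R w) _ (fun n => ?_)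
  rw [smul_zero]

/-- The `W(R)`-module structure on an `I`-adically complete module. -/
noncomputable def wittModule (hc : IsAdicComplete (RingHom.ker (monoidAlgebraAugmentation R)) M) : Module (WittVector p R) M where
  smul := wsmul p R hc
  one_smul := wsmul_one p R hc
  mul_smul := wsmul_mul p R hc
  smul_zero := wsmul_zero_right p R hc
  smul_add := wsmul_add p R hc
  add_smul := wsmul_addl p R hc
  zero_smul := wsmul_zero_left p R hc

lemma filt_eq (sm : WittVector p R → M → M)
    (hsm1 : ∀ (a : MonoidAlgebra ℤ R) (m : M), a • m = sm (wittIota p R a) m)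
    (hsm2 : ∀ w₁ w₂ m, sm (w₁ * w₂) m = sm w₁ (sm w₂ m)) (n : ℕ) :
    (𝕀 ^ n • ⊤ : Submodule (MonoidAlgebra ℤ R) M) =
      (Ideal.span {((p:ℕ) : MonoidAlgebra ℤ R)}) ^ n • ⊤ := by
  refine le_antisymm ?_ ?_
  · refine Submodule.smul_le.2 (fun c hcmem x _ => ?_)
    obtain ⟨w, hw⟩ := Ideal.mem_span_singleton'.mp (iota_pow_mem p R n c hcmem)
    have e1 : wittIota p R c = wittIota p R (((p:ℕ) : MonoidAlgebra ℤ R) ^ n) * w := by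
      rw [map_pow, map_natCast, ← hw]; ring
    have : c • x = (((p:ℕ) : MonoidAlgebra ℤ R) ^ n) • (sm w x) := by
      rw [hsm1, e1, hsm2, ← hsm1]
    rw [this]
    exact Submodule.smul_mem_smul (Ideal.pow_mem_pow (Ideal.mem_span_singleton_self _) n)
      Submodule.mem_top
  · refine Submodule.smul_mono_left (Ideal.pow_right_mono ?_ n)
    rw [Ideal.span_le]
    intro z hz
    simp only [Set.mem_singleton_iff] at hz
    subst hz
    exact p_mem_ker p R

end ModulePart

lemma isAdicComplete_of_filt {A' : Type*} [CommRing A'] {N : Type*} [AddCommGroup N]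
    [Module A' N] {I J : Ideal A'}
    (h : ∀ n, (I ^ n • ⊤ : Submodule A' N) = J ^ n • ⊤) (hc : IsAdicComplete J N) :
    IsAdicComplete I N := by
  refine { toIsHausdorff := ⟨?_⟩, toIsPrecomplete := ⟨?_⟩ }
  · intro x hx
    refine hc.toIsHausdorff.haus x (fun n => ?_)
    rw [← h n]
    exact hx n
  · intro f hf
    obtain ⟨L, hL⟩ := hc.toIsPrecomplete.prec (f := f) (fun {m n} hmn => by
      rw [← h m]; exact hf hmn)
    exact ⟨L, fun n => by rw [h n]; exact hL n⟩

end Stmt16Aux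

theorem stmt16 (p : ℕ) [Fact p.Prime]
    (R : Type*) [CommRing R] [CharP R p] [PerfectRing R p]
    (M : Type*) [AddCommGroup M] [instM : Module (MonoidAlgebra ℤ R) M] :
    (IsAdicComplete (Ideal.span {(p : MonoidAlgebra ℤ R)}) M ∧
        ∃ I : Module (WittVector p R) M,
          @Module.compHom (WittVector p R) (MonoidAlgebra ℤ R) M _ _ I _ (wittIota p R) =
            instM) ↔
      IsAdicComplete (RingHom.ker (monoidAlgebraAugmentation R)) M := by
  constructor
  · rintro ⟨hp, instW, hcomp⟩
    letI := instW
    have hsm1 : ∀ (a : MonoidAlgebra ℤ R) (m : M), a • m = (wittIota p R a) • m := by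
      intro a m
      rw [← hcomp]
      with_unfolding_all rfl
    have hsm2 : ∀ (w₁ w₂ : WittVector p R) (m : M), (w₁ * w₂) • m = w₁ • (w₂ • m) :=
      fun w₁ w₂ m => mul_smul w₁ w₂ m
    refine Stmt16Aux.isAdicComplete_of_filt
      (fun n => Stmt16Aux.filt_eq p R (fun w m => w • m) hsm1 hsm2 n) ?_
    have : ((p : ℕ) : MonoidAlgebra ℤ R) = (p : MonoidAlgebra ℤ R) := by norm_cast
    rw [this]
    exact hp
  · intro hI
    letI instW := Stmt16Aux.wittModule p R hI
    have hcomp : @Module.compHom (WittVector p R) (MonoidAlgebra ℤ R) M _ _ instW _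
        (wittIota p R) = instM := by
      refine Module.ext' _ _ (fun a m => ?_)
      exact Stmt16Aux.wsmul_iota p R hI a m
    refine ⟨?_, instW, hcomp⟩
    have h := fun n => (Stmt16Aux.filt_eq p R (Stmt16Aux.wsmul p R hI)
      (fun a m => (Stmt16Aux.wsmul_iota p R hI a m).symm)
      (Stmt16Aux.wsmul_mul p R hI) n).symm
    have : ((p : ℕ) : MonoidAlgebra ℤ R) = (p : MonoidAlgebra ℤ R) := by norm_cast
    rw [← this]
    exact Stmt16Aux.isAdicComplete_of_filt h hI
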